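/- Stein's lemma (converse direction): for finite probability distributions P, Q on a finite set X with D(P‖Q) < ∞, and any 0 < ε < 1, limsup_{n→∞} −(1/n) log β_ε(Pⁿ, Qⁿ) ≤ D(P‖Q), where Pⁿ and Qⁿ denote n-fold i.i.d. product distributions. -/

import Mathlib

open Finset

/-- The set of achievable type-II error probabilities for stochastic tests
with type-I error at most `ε`. -/
def betaSet {X : Type*} [Fintype X] (P Q : X → ℝ) (ε : ℝ) : Set ℝ :=
  {b | ∃ T : X → ℝ, (∀ x, 0 ≤ T x ∧ T x ≤ 1) ∧ 1 - ε ≤ ∑ x, P x * T x ∧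
    b = ∑ x, Q x * T x}

/-- The optimal type-II error `β_ε(P,Q)`. -/
noncomputable def beta {X : Type*} [Fintype X] (P Q : X → ℝ) (ε : ℝ) : ℝ :=
  sInf (betaSet P Q ε)

/-- The `n`-fold i.i.d. product distribution. -/
def prodDist {X : Type*} [Fintype X] (P : X → ℝ) (n : ℕ) : (Fin n → X) → ℝ :=
  fun xs => ∏ i, P (xs i)

/-- Kullback-Leibler divergence (natural log), with the convention `0 log(0/0) = 0`. -/
noncomputable def klDiv {X : Type*} [Fintype X] (P Q : X → ℝ) : ℝ :=
  ∑ x, if P x = 0 then 0 else P x * Real.log (P x / Q x)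

section Helpers
variable {X : Type*} [Fintype X]

lemma sum_prod_eq (n : ℕ) (h : Fin n → X → ℝ) :
    ∑ xs : Fin n → X, ∏ i, h i (xs i) = ∏ i, ∑ x, h i x := by
  classical
  rw [Finset.prod_univ_sum, Fintype.piFinset_univ]

variable (P : X → ℝ)

lemma exp_single (hP1 : ∑ x, P x = 1) (n : ℕ) (i : Fin n) (h : X → ℝ) :
    ∑ xs : Fin n → X, (∏ k, P (xs k)) * h (xs i) = ∑ x, P x * h x := by
  classical
  have e1 : ∀ xs : Fin n → X, (∏ k, P (xs k)) * h (xs i)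
      = ∏ k, (P (xs k) * if i = k then h (xs k) else 1) := by
    intro xs
    rw [Finset.prod_mul_distrib, Finset.prod_ite_eq]
    simp
  simp_rw [e1]
  rw [sum_prod_eq n (fun k x => P x * if i = k then h x else 1)]
  have e2 : ∀ k : Fin n, (∑ x, P x * if i = k then h x else 1)
      = if i = k then ∑ x, P x * h x else 1 := by
    intro k
    by_cases hk : i = k <;> simp [hk, hP1]
  simp_rw [e2]
  rw [Finset.prod_ite_eq]
  simp

lemma exp_pair (hP1 : ∑ x, P x = 1) (n : ℕ) {i j : Fin n} (hij : i ≠ j) (h h' : X → ℝ) :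
    ∑ xs : Fin n → X, (∏ k, P (xs k)) * (h (xs i) * h' (xs j)) =
      (∑ x, P x * h x) * (∑ x, P x * h' x) := by
  classical
  have e1 : ∀ xs : Fin n → X, (∏ k, P (xs k)) * (h (xs i) * h' (xs j))
      = ∏ k, (P (xs k) * (if i = k then h (xs k) else 1) * (if j = k then h' (xs k) else 1)) := by
    intro xs
    rw [Finset.prod_mul_distrib, Finset.prod_mul_distrib, Finset.prod_ite_eq,
      Finset.prod_ite_eq]
    simp [mul_assoc]
  simp_rw [e1]
  rw [sum_prod_eq n (fun k x => P x * (if i = k then h x else 1) * (if j = k then h' x else 1))]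
  have e2 : ∀ k : Fin n, (∑ x, P x * (if i = k then h x else 1) * (if j = k then h' x else 1))
      = (if i = k then (∑ x, P x * h x) else 1) * (if j = k then (∑ x, P x * h' x) else 1) := by
    intro k
    rcases eq_or_ne i k with rfl | hik
    · simp [Ne.symm hij, hP1]
    · rcases eq_or_ne j k with rfl | hjk
      · simp [hik, hP1]
      · simp [hik, hjk, hP1]
  simp_rw [e2]
  rw [Finset.prod_mul_distrib, Finset.prod_ite_eq, Finset.prod_ite_eq]
  simp

lemma variance_eq (hP1 : ∑ x, P x = 1) (g : X → ℝ)
    (hg : ∑ x, P x * g x = 0) (n : ℕ) :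
    ∑ xs : Fin n → X, (∏ k, P (xs k)) * (∑ i, g (xs i)) ^ 2
      = n * ∑ x, P x * g x ^ 2 := by
  classical
  have sq' : ∀ xs : Fin n → X, (∑ i, g (xs i)) ^ 2 = ∑ i, ∑ j, g (xs i) * g (xs j) := by
    intro xs; rw [sq, Finset.sum_mul_sum]
  simp_rw [sq', Finset.mul_sum]
  rw [Finset.sum_comm]
  have step : ∀ i : Fin n,
      (∑ xs : Fin n → X, ∑ j, (∏ k, P (xs k)) * (g (xs i) * g (xs j)))
        = ∑ x, P x * g x ^ 2 := by
    intro i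
    rw [Finset.sum_comm]
    have e : ∀ j : Fin n, (∑ xs : Fin n → X, (∏ k, P (xs k)) * (g (xs i) * g (xs j)))
        = if i = j then ∑ x, P x * g x ^ 2 else 0 := by
      intro j
      rcases eq_or_ne i j with rfl | hij
      · rw [if_pos rfl]
        have := exp_single P hP1 n i (fun x => g x * g x)
        simpa [pow_two] using this
      · rw [if_neg hij, exp_pair P hP1 n hij g g, hg, zero_mul]
    simp_rw [e]
    simp
  simp_rw [step]
  rw [Finset.sum_const, Finset.card_univ, Fintype.card_fin, nsmul_eq_mul, Finset.mul_sum]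

lemma prodDist_sum_one (hP1 : ∑ x, P x = 1) (n : ℕ) :
    ∑ xs : Fin n → X, prodDist P n xs = 1 := by
  have := sum_prod_eq (X := X) n (fun _ => P)
  simpa [prodDist, hP1] using this

end Helpers

/-- Stein's lemma, converse direction:
`limsup_n -(1/n) log β_ε(Pⁿ, Qⁿ) ≤ D(P‖Q)`. -/
theorem stein_converse {X : Type*} [Fintype X] (P Q : X → ℝ)
    (hP0 : ∀ x, 0 ≤ P x) (hP1 : ∑ x, P x = 1)
    (hQ0 : ∀ x, 0 ≤ Q x) (hQ1 : ∑ x, Q x = 1)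
    (habs : ∀ x, 0 < P x → 0 < Q x)
    {ε : ℝ} (hε0 : 0 < ε) (hε1 : ε < 1) :
    Filter.limsup
      (fun n : ℕ => -(1 / (n : ℝ)) * Real.log (beta (prodDist P n) (prodDist Q n) ε))
      Filter.atTop ≤ klDiv P Q := by
  classical
  set D := klDiv P Q with hD
  set f : X → ℝ := fun x => if P x = 0 then 0 else Real.log (P x / Q x) with hf
  have hfD : ∑ x, P x * f x = D := by
    rw [hD, klDiv]
    refine Finset.sum_congr rfl fun x _ => ?_
    by_cases h : P x = 0 <;> simp [hf, h]
  set g : X → ℝ := fun x => f x - D with hgdef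
  have hg0 : ∑ x, P x * g x = 0 := by
    simp only [hgdef, mul_sub]
    rw [Finset.sum_sub_distrib, hfD, ← Finset.sum_mul, hP1, one_mul, sub_self]
  set M : ℝ := ∑ x, P x * g x ^ 2 with hM
  have hM0 : 0 ≤ M := Finset.sum_nonneg fun x _ => mul_nonneg (hP0 x) (sq_nonneg _)
  have hPn0 : ∀ (n : ℕ) (xs : Fin n → X), 0 ≤ prodDist P n xs :=
    fun n xs => Finset.prod_nonneg fun i _ => hP0 _
  have hQn0 : ∀ (n : ℕ) (xs : Fin n → X), 0 ≤ prodDist Q n xs :=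
    fun n xs => Finset.prod_nonneg fun i _ => hQ0 _
  have hone : ∀ n : ℕ, (1:ℝ) ∈ betaSet (prodDist P n) (prodDist Q n) ε := by
    intro n
    refine ⟨fun _ => 1, fun x => ⟨zero_le_one, le_refl 1⟩, ?_, ?_⟩
    · have h := prodDist_sum_one P hP1 n
      simp only [mul_one]
      rw [h]; linarith
    · have h := prodDist_sum_one Q hQ1 n
      simp only [mul_one]
      rw [h]
  have hbdd : ∀ n : ℕ, BddBelow (betaSet (prodDist P n) (prodDist Q n) ε) := by
    intro n
    refine ⟨0, ?_⟩
    rintro b ⟨T, hT, -, rfl⟩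
    exact Finset.sum_nonneg fun xs _ => mul_nonneg (hQn0 n xs) (hT xs).1
  have hble : ∀ n : ℕ, beta (prodDist P n) (prodDist Q n) ε ≤ 1 :=
    fun n => csInf_le (hbdd n) (hone n)
  have hbnn : ∀ n : ℕ, 0 ≤ beta (prodDist P n) (prodDist Q n) ε := by
    intro n
    apply le_csInf ⟨1, hone n⟩
    rintro b ⟨T, hT, -, rfl⟩
    exact Finset.sum_nonneg fun xs _ => mul_nonneg (hQn0 n xs) (hT xs).1
  set u : ℕ → ℝ := fun n => -(1 / (n : ℝ)) * Real.log (beta (prodDist P n) (prodDist Q n) ε)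
    with hu
  have hu0 : ∀ n : ℕ, 0 ≤ u n := by
    intro n
    have hlog : Real.log (beta (prodDist P n) (prodDist Q n) ε) ≤ 0 :=
      Real.log_nonpos (hbnn n) (hble n)
    have h1n : (0:ℝ) ≤ 1 / (n : ℝ) := by positivity
    rw [hu]
    dsimp only
    nlinarith
  have core : ∀ δ : ℝ, 0 < δ → ∀ n : ℕ, 1 ≤ n → M / ((n:ℝ) * δ ^ 2) ≤ (1 - ε) / 2 →
      ((1 - ε) / 2) * Real.exp (-((n:ℝ) * (D + δ))) ≤ beta (prodDist P n) (prodDist Q n) ε := by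
    intro δ hδ n hn1 hcheb
    have hn0 : (0:ℝ) < n := by exact_mod_cast hn1
    apply le_csInf ⟨1, hone n⟩
    rintro b ⟨T, hT, hTP, rfl⟩
    set S : (Fin n → X) → ℝ := fun xs => ∑ i, f (xs i) with hS
    set cond : (Fin n → X) → Prop :=
      fun xs => (∀ i, 0 < P (xs i)) ∧ S xs ≤ (n:ℝ) * (D + δ) with hcond
    have hQP : ∀ xs, cond xs →
        prodDist P n xs * Real.exp (-((n:ℝ) * (D + δ))) ≤ prodDist Q n xs := by
      intro xs hxs
      obtain ⟨hpos, hSle⟩ := hxs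
      have hQpos : ∀ i, 0 < Q (xs i) := fun i => habs _ (hpos i)
      have hexp : Real.exp (S xs) = ∏ i, (P (xs i) / Q (xs i)) := by
        rw [hS]
        dsimp only
        rw [Real.exp_sum]
        refine Finset.prod_congr rfl fun i _ => ?_
        rw [hf]
        dsimp only
        rw [if_neg (hpos i).ne']
        exact Real.exp_log (div_pos (hpos i) (hQpos i))
      have hiden : prodDist Q n xs * Real.exp (S xs) = prodDist P n xs := by
        rw [hexp, prodDist, prodDist, ← Finset.prod_mul_distrib]
        refine Finset.prod_congr rfl fun i _ => ?_
        rw [mul_div_assoc']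
        exact mul_div_cancel_left₀ _ (hQpos i).ne'
      have hQeq : prodDist Q n xs = prodDist P n xs * Real.exp (-(S xs)) := by
        rw [← hiden, Real.exp_neg, mul_assoc, mul_inv_cancel₀ (Real.exp_ne_zero _), mul_one]
      rw [hQeq]
      exact mul_le_mul_of_nonneg_left (Real.exp_le_exp.2 (by linarith)) (hPn0 n xs)
    have hvar : ∑ xs : Fin n → X, prodDist P n xs * (S xs - (n:ℝ) * D) ^ 2 = (n:ℝ) * M := by
      have e : ∀ xs : Fin n → X, S xs - (n:ℝ) * D = ∑ i, g (xs i) := by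
        intro xs
        rw [hS, hgdef]
        dsimp only
        rw [Finset.sum_sub_distrib, Finset.sum_const, Finset.card_univ, Fintype.card_fin,
          nsmul_eq_mul]
      simp_rw [e]
      rw [hM]
      simpa [prodDist] using variance_eq P hP1 g hg0 n
    have hbad : ∑ xs ∈ Finset.univ.filter (fun xs => ¬ cond xs), prodDist P n xs * T xs
        ≤ M / ((n:ℝ) * δ ^ 2) := by
      have hB : (0:ℝ) < ((n:ℝ) * δ) ^ 2 := by positivity
      have hterm : ∀ xs ∈ Finset.univ.filter (fun xs => ¬ cond xs),
          prodDist P n xs * T xs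
            ≤ prodDist P n xs * (S xs - (n:ℝ) * D) ^ 2 / ((n:ℝ) * δ) ^ 2 := by
        intro xs hxs
        rw [Finset.mem_filter, hcond] at hxs
        by_cases hpos : ∀ i, 0 < P (xs i)
        · have hSgt : (n:ℝ) * (D + δ) < S xs := by
            by_contra hcon
            exact hxs.2 ⟨hpos, not_lt.1 hcon⟩
          have h1 : (n:ℝ) * δ ≤ S xs - (n:ℝ) * D := by nlinarith
          have h2 : ((n:ℝ) * δ) ^ 2 ≤ (S xs - (n:ℝ) * D) ^ 2 :=
            pow_le_pow_left₀ (by positivity) h1 2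
          have hp := hPn0 n xs
          have hT1 := (hT xs).2
          have hT0 := (hT xs).1
          rw [le_div_iff₀ hB]
          calc prodDist P n xs * T xs * ((n:ℝ) * δ) ^ 2
              ≤ prodDist P n xs * 1 * ((n:ℝ) * δ) ^ 2 := by
                exact mul_le_mul_of_nonneg_right (mul_le_mul_of_nonneg_left hT1 hp)
                  (le_of_lt hB)
            _ = prodDist P n xs * ((n:ℝ) * δ) ^ 2 := by ring
            _ ≤ prodDist P n xs * (S xs - (n:ℝ) * D) ^ 2 :=
                mul_le_mul_of_nonneg_left h2 hp
        · obtain ⟨i, hi⟩ := not_forall.1 hpos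
          have hPi : P (xs i) = 0 := le_antisymm (not_lt.1 hi) (hP0 _)
          have hz : prodDist P n xs = 0 := by
            rw [prodDist]; exact Finset.prod_eq_zero (Finset.mem_univ i) hPi
          rw [hz]; simp
      calc ∑ xs ∈ Finset.univ.filter (fun xs => ¬ cond xs), prodDist P n xs * T xs
          ≤ ∑ xs ∈ Finset.univ.filter (fun xs => ¬ cond xs),
              prodDist P n xs * (S xs - (n:ℝ) * D) ^ 2 / ((n:ℝ) * δ) ^ 2 :=
            Finset.sum_le_sum hterm
        _ ≤ ∑ xs : Fin n → X, prodDist P n xs * (S xs - (n:ℝ) * D) ^ 2 / ((n:ℝ) * δ) ^ 2 :=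
            Finset.sum_le_sum_of_subset_of_nonneg (Finset.filter_subset _ _)
              (fun xs _ _ => by
                have := hPn0 n xs
                positivity)
        _ = ((n:ℝ) * M) / ((n:ℝ) * δ) ^ 2 := by rw [← Finset.sum_div, hvar]
        _ = M / ((n:ℝ) * δ ^ 2) := by
            field_simp
    have hsplit := Finset.sum_filter_add_sum_filter_not Finset.univ cond
        (fun xs => prodDist P n xs * T xs)
    have hgood : (1 - ε) / 2 ≤ ∑ xs ∈ Finset.univ.filter cond, prodDist P n xs * T xs := by
      have h1 : 1 - ε ≤ ∑ xs : Fin n → X, prodDist P n xs * T xs := hTP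
      have h2 := hbad
      linarith
    calc ((1 - ε) / 2) * Real.exp (-((n:ℝ) * (D + δ)))
        ≤ (∑ xs ∈ Finset.univ.filter cond, prodDist P n xs * T xs)
            * Real.exp (-((n:ℝ) * (D + δ))) :=
          mul_le_mul_of_nonneg_right hgood (Real.exp_nonneg _)
      _ = ∑ xs ∈ Finset.univ.filter cond,
            prodDist P n xs * Real.exp (-((n:ℝ) * (D + δ))) * T xs := by
          rw [Finset.sum_mul]
          refine Finset.sum_congr rfl fun xs _ => by ring
      _ ≤ ∑ xs ∈ Finset.univ.filter cond, prodDist Q n xs * T xs := by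
          refine Finset.sum_le_sum fun xs hxs => ?_
          rw [Finset.mem_filter] at hxs
          exact mul_le_mul_of_nonneg_right (hQP xs hxs.2) (hT xs).1
      _ ≤ ∑ xs : Fin n → X, prodDist Q n xs * T xs :=
          Finset.sum_le_sum_of_subset_of_nonneg (Finset.filter_subset _ _)
            (fun xs _ _ => mul_nonneg (hQn0 n xs) (hT xs).1)
  have key : ∀ δ : ℝ, 0 < δ → Filter.limsup u Filter.atTop ≤ D + 2 * δ := by
    intro δ hδ
    have hhalf : (0:ℝ) < (1 - ε) / 2 := by linarith
    set C : ℝ := -Real.log ((1 - ε) / 2) with hC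
    apply Filter.limsup_le_of_le (Filter.isCoboundedUnder_le_of_le Filter.atTop hu0)
    have h1 : Filter.Tendsto (fun n : ℕ => M / ((n:ℝ) * δ ^ 2)) Filter.atTop (nhds 0) :=
      Filter.Tendsto.div_atTop tendsto_const_nhds
        (Filter.Tendsto.atTop_mul_const (by positivity) tendsto_natCast_atTop_atTop)
    have h2 : Filter.Tendsto (fun n : ℕ => C / (n:ℝ)) Filter.atTop (nhds 0) :=
      Filter.Tendsto.div_atTop tendsto_const_nhds tendsto_natCast_atTop_atTop
    filter_upwards [h1.eventually_le_const hhalf, h2.eventually_le_const hδ,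
      Filter.eventually_ge_atTop 1] with n hc1 hc2 hn1
    have hn0 : (0:ℝ) < n := by exact_mod_cast hn1
    have hb := core δ hδ n hn1 hc1
    have hcn : (0:ℝ) < ((1 - ε) / 2) * Real.exp (-((n:ℝ) * (D + δ))) := by positivity
    have hlog := Real.log_le_log hcn hb
    rw [Real.log_mul (ne_of_gt hhalf) (Real.exp_ne_zero _), Real.log_exp] at hlog
    have hm : u n ≤ -(1 / (n:ℝ)) * (Real.log ((1 - ε) / 2) + -((n:ℝ) * (D + δ))) := by
      rw [hu]
      dsimp only
      exact mul_le_mul_of_nonpos_left hlog (by positivity |> neg_nonpos_of_nonneg)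
    have heq : -(1 / (n:ℝ)) * (Real.log ((1 - ε) / 2) + -((n:ℝ) * (D + δ)))
        = C / (n:ℝ) + (D + δ) := by
      rw [hC]
      field_simp
      ring
    rw [heq] at hm
    linarith
  apply le_of_forall_pos_le_add
  intro η hη
  have := key (η / 2) (by linarith)
  linarith
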